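/- Let n ≥ 7, let Σ be the set of 3-element subsets of {1,…,n}, let α = {1,2,3}, and let B ≤ A_n be the subgroup of even permutations g with g(α) = α whose restrictions to α and to its complement are both even. Then B is transitive on each orbit of the setwise stabiliser A of α in A_n; explicitly, for all β, γ ∈ Σ with |β ∩ α| = |γ ∩ α|, there exists b ∈ B with b(β) = γ. -/
import Mathlib

open Finset Equiv

private lemma image_swap_of_mem_notMem {n : ℕ} {S : Finset (Fin n)} {s t : Fin n}
    (hs : s ∈ S) (ht : t ∉ S) : S.image (Equiv.swap s t) = insert t (S.erase s) := by
  ext x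
  simp only [mem_image, mem_insert, mem_erase]
  constructor
  · rintro ⟨y, hy, rfl⟩
    rcases eq_or_ne y s with rfl | hys
    · left; exact Equiv.swap_apply_left _ _
    rcases eq_or_ne y t with rfl | hyt
    · exact absurd hy ht
    · rw [Equiv.swap_apply_of_ne_of_ne hys hyt]; exact Or.inr ⟨hys, hy⟩
  · rintro (rfl | ⟨hxs, hx⟩)
    · exact ⟨s, hs, Equiv.swap_apply_left _ _⟩
    · exact ⟨x, hx, Equiv.swap_apply_of_ne_of_ne hxs (fun h => ht (h ▸ hx))⟩

private lemma image_swap_self {n : ℕ} {S : Finset (Fin n)} {s t : Fin n}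
    (hs : s ∈ S) (ht : t ∈ S) : S.image (Equiv.swap s t) = S := by
  apply Finset.eq_of_subset_of_card_le
  · intro x hx
    obtain ⟨y, hy, rfl⟩ := Finset.mem_image.1 hx
    rcases eq_or_ne y s with rfl | h1
    · rw [Equiv.swap_apply_left]; exact ht
    rcases eq_or_ne y t with rfl | h2
    · rw [Equiv.swap_apply_right]; exact hs
    · rwa [Equiv.swap_apply_of_ne_of_ne h1 h2]
  · rw [Finset.card_image_of_injective _ (Equiv.injective _)]

private lemma exists_even_perm_image {n : ℕ} (C : Finset (Fin n)) (hC : 3 ≤ C.card)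
    (S T : Finset (Fin n)) (hS : S ⊆ C) (hT : T ⊆ C) (hST : S.card = T.card) :
    ∃ g : Equiv.Perm (Fin n), g ∈ alternatingGroup (Fin n) ∧
      (∀ x ∉ C, g x = x) ∧ S.image g = T := by
  -- First, find any permutation supported in C mapping S onto T.
  have main : ∀ k (S : Finset (Fin n)), S ⊆ C → S.card = T.card → (S \ T).card = k →
      ∃ g : Equiv.Perm (Fin n), (∀ x ∉ C, g x = x) ∧ S.image g = T := by
    intro k
    induction k with
    | zero =>
      intro S hSC hcard h0
      have hsub : S ⊆ T := by
        rwa [← Finset.sdiff_eq_empty_iff_subset, ← Finset.card_eq_zero]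
      have : S = T := Finset.eq_of_subset_of_card_le hsub (le_of_eq hcard.symm)
      subst this
      exact ⟨1, fun x _ => rfl, by simp⟩
    | succ k ih =>
      intro S hSC hcard hk
      have hST' : (S \ T).Nonempty := by
        rw [← Finset.card_pos, hk]; omega
      obtain ⟨s, hs⟩ := hST'
      have hTS : (T \ S).Nonempty := by
        rw [← Finset.card_pos, Finset.card_sdiff_comm hcard.symm, hk]; omega
      obtain ⟨t, ht⟩ := hTS
      rw [Finset.mem_sdiff] at hs ht
      have hS'C : insert t (S.erase s) ⊆ C :=
        Finset.insert_subset (hT ht.1) ((Finset.erase_subset _ _).trans hSC)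
      have htS' : t ∉ S.erase s := fun h => ht.2 (Finset.mem_of_mem_erase h)
      have hcard' : (insert t (S.erase s)).card = T.card := by
        rw [Finset.card_insert_of_notMem htS', Finset.card_erase_of_mem hs.1]
        have : 1 ≤ S.card := Finset.card_pos.2 ⟨s, hs.1⟩
        omega
      have hk' : ((insert t (S.erase s)) \ T).card = k := by
        rw [Finset.insert_sdiff_of_mem _ ht.1, Finset.erase_sdiff_comm,
          Finset.card_erase_of_mem (Finset.mem_sdiff.2 hs), hk]
        omega
      obtain ⟨g, hg1, hg2⟩ := ih (insert t (S.erase s)) hS'C hcard' hk'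
      refine ⟨g * Equiv.swap s t, ?_, ?_⟩
      · intro x hx
        have hxs : x ≠ s := fun h => hx (h ▸ hSC hs.1)
        have hxt : x ≠ t := fun h => hx (h ▸ hT ht.1)
        rw [Equiv.Perm.mul_apply, Equiv.swap_apply_of_ne_of_ne hxs hxt]
        exact hg1 x hx
      · have himg : S.image (Equiv.swap s t) = insert t (S.erase s) :=
          image_swap_of_mem_notMem hs.1 ht.2
        calc S.image (g * Equiv.swap s t)
            = (S.image (Equiv.swap s t)).image g := by
              rw [Finset.image_image]; rfl
          _ = T := by rw [himg, hg2]
  obtain ⟨g, hgC, hgim⟩ := main _ S hS hST rfl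
  rcases Int.units_eq_one_or (Equiv.Perm.sign g) with hsgn | hsgn
  · exact ⟨g, Equiv.Perm.mem_alternatingGroup.2 hsgn, hgC, hgim⟩
  · by_cases h2 : 2 ≤ S.card
    · obtain ⟨s1, hs1, s2, hs2, hne⟩ := Finset.one_lt_card.1 h2
      have hne' : s1 ≠ s2 := hne
      refine ⟨g * Equiv.swap s1 s2, ?_, ?_, ?_⟩
      · rw [Equiv.Perm.mem_alternatingGroup, map_mul, hsgn, Equiv.Perm.sign_swap hne']
        norm_num
      · intro x hx
        have hxs1 : x ≠ s1 := fun h => hx (h ▸ hS hs1)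
        have hxs2 : x ≠ s2 := fun h => hx (h ▸ hS hs2)
        rw [Equiv.Perm.mul_apply, Equiv.swap_apply_of_ne_of_ne hxs1 hxs2]
        exact hgC x hx
      · calc S.image (g * Equiv.swap s1 s2)
            = (S.image (Equiv.swap s1 s2)).image g := by
              rw [Finset.image_image]; rfl
          _ = T := by rw [image_swap_self hs1 hs2, hgim]
    · have hCS : 2 ≤ (C \ S).card := by
        rw [Finset.card_sdiff_of_subset hS]
        have := Finset.card_le_card hS
        omega
      obtain ⟨c1, hc1, c2, hc2, hne⟩ := Finset.one_lt_card.1 hCS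
      rw [Finset.mem_sdiff] at hc1 hc2
      have hne' : c1 ≠ c2 := hne
      refine ⟨g * Equiv.swap c1 c2, ?_, ?_, ?_⟩
      · rw [Equiv.Perm.mem_alternatingGroup, map_mul, hsgn, Equiv.Perm.sign_swap hne']
        norm_num
      · intro x hx
        have hxc1 : x ≠ c1 := fun h => hx (h ▸ hc1.1)
        have hxc2 : x ≠ c2 := fun h => hx (h ▸ hc2.1)
        rw [Equiv.Perm.mul_apply, Equiv.swap_apply_of_ne_of_ne hxc1 hxc2]
        exact hgC x hx
      · rw [← hgim]
        apply Finset.image_congr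
        intro x hx
        have hxc1 : x ≠ c1 := fun h => hc1.2 (h ▸ hx)
        have hxc2 : x ≠ c2 := fun h => hc2.2 (h ▸ hx)
        rw [Equiv.Perm.mul_apply, Equiv.swap_apply_of_ne_of_ne hxc1 hxc2]

/-- Let `n ≥ 7`, let `α = {0,1,2} ⊆ Fin n`, and let `B ≤ A_n` be the subgroup
of even permutations stabilising `α` whose restrictions to `α` and to its complement are both
even (described here as the products `h₁ * h₂` of even permutations with `h₁` fixing the
complement of `α` pointwise and `h₂` fixing `α` pointwise). Then `B` is transitive on each
orbit of the setwise stabiliser of `α` in `A_n` on the set `Σ` of 3-element subsets of `Fin n`: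
explicitly, for all `β, γ ∈ Σ` with `|β ∩ α| = |γ ∩ α|`, there is `b ∈ B` with `b(β) = γ`. -/
theorem alternating_three_subsets_transitive (n : ℕ) (hn : 7 ≤ n)
    (α : Finset (Fin n)) (hα : α = {⟨0, by omega⟩, ⟨1, by omega⟩, ⟨2, by omega⟩})
    (β γ : Finset (Fin n)) (hβ : β.card = 3) (hγ : γ.card = 3)
    (hβγ : (β ∩ α).card = (γ ∩ α).card) :
    ∃ b : Equiv.Perm (Fin n),
      (∃ h₁ h₂ : Equiv.Perm (Fin n), b = h₁ * h₂ ∧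
        h₁ ∈ alternatingGroup (Fin n) ∧ h₂ ∈ alternatingGroup (Fin n) ∧
        (∀ x ∉ α, h₁ x = x) ∧ (∀ x ∈ α, h₂ x = x)) ∧
      β.image b = γ := by
  have hαcard : α.card = 3 := by
    rw [hα]
    rw [Finset.card_insert_of_notMem (by simp [Fin.ext_iff]),
      Finset.card_insert_of_notMem (by simp [Fin.ext_iff]), Finset.card_singleton]
  -- complement of α
  have hαc : 3 ≤ (αᶜ : Finset (Fin n)).card := by
    rw [Finset.card_compl, hαcard, Fintype.card_fin]
    omega
  -- cardinalities of the pieces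
  have hβsplit : (β ∩ α).card + (β \ α).card = 3 := by
    rw [Finset.card_inter_add_card_sdiff, hβ]
  have hγsplit : (γ ∩ α).card + (γ \ α).card = 3 := by
    rw [Finset.card_inter_add_card_sdiff, hγ]
  have hsd : (β \ α).card = (γ \ α).card := by omega
  -- h₁ : even perm supported in α mapping β ∩ α to γ ∩ α
  obtain ⟨h₁, hh₁A, hh₁supp, hh₁im⟩ := exists_even_perm_image α (by omega) (β ∩ α) (γ ∩ α)
    (Finset.inter_subset_right) (Finset.inter_subset_right) hβγ
  -- h₂ : even perm supported in αᶜ mapping β \ α to γ \ α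
  obtain ⟨h₂, hh₂A, hh₂supp, hh₂im⟩ := exists_even_perm_image αᶜ hαc (β \ α) (γ \ α)
    (fun x hx => Finset.mem_compl.2 (Finset.mem_sdiff.1 hx).2)
    (fun x hx => Finset.mem_compl.2 (Finset.mem_sdiff.1 hx).2) hsd
  have hh₂fix : ∀ x ∈ α, h₂ x = x := fun x hx =>
    hh₂supp x (by simp [Finset.mem_compl, hx])
  refine ⟨h₁ * h₂, ⟨h₁, h₂, rfl, hh₁A, hh₂A, hh₁supp, hh₂fix⟩, ?_⟩
  have hsplit : β ∩ α ∪ β \ α = β := sup_inf_sdiff β α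
  calc β.image (h₁ * h₂)
      = (β ∩ α ∪ β \ α).image (h₁ * h₂) := by rw [hsplit]
    _ = (β ∩ α).image (h₁ * h₂) ∪ (β \ α).image (h₁ * h₂) := Finset.image_union _ _
    _ = (γ ∩ α) ∪ (γ \ α) := by
        congr 1
        · rw [← hh₁im]
          apply Finset.image_congr
          intro x hx
          rw [Equiv.Perm.mul_apply, hh₂fix x (Finset.mem_inter.1 hx).2]
        · rw [← hh₂im]
          apply Finset.image_congr
          intro x hx
          have : h₂ x ∈ γ \ α := by
            rw [← hh₂im]
            exact Finset.mem_image_of_mem _ hx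
          rw [Equiv.Perm.mul_apply, hh₁supp _ (Finset.mem_sdiff.1 this).2]
    _ = γ := sup_inf_sdiff γ α
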